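/- Let the Stokes matrix R of a qubit channel have 2×2 upper-left block with singular values d_z, d_x, and write its singular value decomposition as B·diag(d_z,d_x)·A with A, B rotation matrices. Then for the rows Ã_z = (d_z A_{zz}, d_x A_{zx}) and Ã_x = (d_z A_{xz}, d_x A_{xx}) one has h((1+‖Ã_z‖)/2) + h((1+‖Ã_x‖)/2) ≥ h((1+d_z)/2) + h((1+d_x)/2), where ‖Ã_z‖ = √(d_z²A_{zz}² + d_x²A_{zx}²), provided 0 ≤ d_z, d_x ≤ 1. -/

import Mathlib

/-- The binary entropy function (base 2). -/
noncomputable def binEnt (p : ℝ) : ℝ :=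
  -(p * Real.logb 2 p) - (1 - p) * Real.logb 2 (1 - p)

open Real Set in
/-- `log(1+u) - log(1-u) ≤ 2u/(1-u²)` on `[0,1)`. -/
lemma atanh_le (u : ℝ) (hu : u ∈ Ico (0:ℝ) 1) :
    Real.log (1+u) - Real.log (1-u) ≤ 2*u/(1-u^2) := by
  set φ : ℝ → ℝ := fun u => 2*u/(1-u^2) - (Real.log (1+u) - Real.log (1-u)) with hφ
  have key : MonotoneOn φ (Ico (0:ℝ) 1) := by
    have hint : interior (Ico (0:ℝ) 1) = Ioo 0 1 := interior_Ico
    have hd : ∀ x ∈ Ioo (0:ℝ) 1, HasDerivAt φ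
        ((2*(1-x^2) - 2*x*(-(2*x)))/(1-x^2)^2 - (1/(1+x) - (-1)/(1-x))) x := by
      intro x hx
      have h1 : (0:ℝ) < 1 + x := by linarith [hx.1]
      have h2 : (0:ℝ) < 1 - x := by linarith [hx.2]
      have h3 : (1:ℝ) - x^2 ≠ 0 := by nlinarith
      have d1 : HasDerivAt (fun u : ℝ => 2*u/(1-u^2)) ((2*(1-x^2) - 2*x*(-(2*x)))/(1-x^2)^2) x := by
        exact (((hasDerivAt_id x).const_mul 2).div
          (((hasDerivAt_pow 2 x).const_sub 1)) h3).congr_deriv (by norm_num)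
      have d2 : HasDerivAt (fun u : ℝ => Real.log (1+u)) (1/(1+x)) x := by
        simpa using (((hasDerivAt_id x).const_add 1).log h1.ne')
      have d3 : HasDerivAt (fun u : ℝ => Real.log (1-u)) ((-1)/(1-x)) x := by
        simpa using (((hasDerivAt_id x).const_sub 1).log h2.ne')
      exact d1.sub (d2.sub d3)
    apply monotoneOn_of_deriv_nonneg (convex_Ico 0 1)
    · simp only [hφ]
      apply ContinuousOn.sub
      · apply ContinuousOn.div (by fun_prop) (by fun_prop)
        intro x hx
        have h : (0:ℝ) < 1 - x^2 := by nlinarith [hx.1, hx.2]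
        exact h.ne'
      · apply ContinuousOn.sub
        · apply ContinuousOn.log (by fun_prop)
          intro x hx
          have h : (0:ℝ) < 1 + x := by linarith [hx.1]
          exact h.ne'
        · apply ContinuousOn.log (by fun_prop)
          intro x hx
          have h : (0:ℝ) < 1 - x := by linarith [hx.2]
          exact h.ne'
    · rw [hint]
      intro x hx
      exact ((hd x hx).differentiableAt).differentiableWithinAt
    · rw [hint]
      intro x hx
      rw [(hd x hx).deriv]
      have h1 : (0:ℝ) < 1 + x := by linarith [hx.1]
      have h2 : (0:ℝ) < 1 - x := by linarith [hx.2]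
      have h3 : (0:ℝ) < 1 - x^2 := by nlinarith
      rw [div_sub_div _ _ h1.ne' h2.ne', sub_nonneg,
        div_le_div_iff₀ (by positivity) (by positivity)]
      nlinarith [sq_nonneg x, sq_nonneg (x*(1-x^2)), mul_pos h1 h2]
  have h0 : φ 0 = 0 := by simp [hφ]
  have := key (left_mem_Ico.2 one_pos) hu hu.1
  rw [h0] at this
  simp only [hφ] at this
  linarith

open Real Set in
lemma g_mono : MonotoneOn (fun u : ℝ => (Real.log (1+u) - Real.log (1-u))/u) (Ioo (0:ℝ) 1) := by
  have hint : interior (Ioo (0:ℝ) 1) = Ioo 0 1 := interior_Ioo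
  have hd : ∀ x ∈ Ioo (0:ℝ) 1, HasDerivAt (fun u : ℝ => (Real.log (1+u) - Real.log (1-u))/u)
      (((1/(1+x) - (-1)/(1-x))*x - (Real.log (1+x) - Real.log (1-x))*1)/x^2) x := by
    intro x hx
    have h1 : (0:ℝ) < 1 + x := by linarith [hx.1]
    have h2 : (0:ℝ) < 1 - x := by linarith [hx.2]
    have d2 : HasDerivAt (fun u : ℝ => Real.log (1+u)) (1/(1+x)) x := by
      simpa using (((hasDerivAt_id x).const_add 1).log h1.ne')
    have d3 : HasDerivAt (fun u : ℝ => Real.log (1-u)) ((-1)/(1-x)) x := by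
      simpa using (((hasDerivAt_id x).const_sub 1).log h2.ne')
    exact (d2.sub d3).div (hasDerivAt_id x) hx.1.ne'
  apply monotoneOn_of_deriv_nonneg (convex_Ioo 0 1)
  · intro x hx
    exact ((hd x hx).differentiableAt).continuousAt.continuousWithinAt
  · rw [hint]; intro x hx
    exact ((hd x hx).differentiableAt).differentiableWithinAt
  · rw [hint]; intro x hx
    rw [(hd x hx).deriv]
    have h1 : (0:ℝ) < 1 + x := by linarith [hx.1]
    have h2 : (0:ℝ) < 1 - x := by linarith [hx.2]
    have h3 : (0:ℝ) < 1 - x^2 := by nlinarith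
    have hb := atanh_le x ⟨hx.1.le, hx.2⟩
    apply div_nonneg _ (by positivity)
    have he : (1/(1+x) - (-1)/(1-x))*x = 2*x/(1-x^2) := by
      field_simp
      ring
    rw [he, mul_one, sub_nonneg]
    exact hb

open Real Set in

lemma f_concave : ConcaveOn ℝ (Icc (0:ℝ) 1)
    (fun x => Real.binEntropy ((1 + Real.sqrt x)/2)) := by
  set f : ℝ → ℝ := fun x => Real.binEntropy ((1 + Real.sqrt x)/2) with hf
  have hint : interior (Icc (0:ℝ) 1) = Ioo 0 1 := interior_Icc
  have hd : ∀ x ∈ Ioo (0:ℝ) 1, HasDerivAt f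
      (-(((Real.log (1 + Real.sqrt x) - Real.log (1 - Real.sqrt x))/Real.sqrt x)/4)) x := by
    intro x hx
    have hsx : 0 < Real.sqrt x := Real.sqrt_pos.2 hx.1
    have hsx1 : Real.sqrt x < 1 := by
      rw [show (1:ℝ) = Real.sqrt 1 by simp]
      exact Real.sqrt_lt_sqrt hx.1.le hx.2
    set p : ℝ := (1 + Real.sqrt x)/2 with hp
    have hp0 : p ≠ 0 := by rw [hp]; positivity
    have hp1 : p ≠ 1 := by rw [hp]; intro h; nlinarith
    have din : HasDerivAt (fun y : ℝ => (1 + Real.sqrt y)/2) (1/(2 * Real.sqrt x)/2) x :=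
      ((Real.hasDerivAt_sqrt hx.1.ne').const_add 1).div_const 2
    have dbe := (Real.hasDerivAt_binEntropy hp0 hp1).comp x din
    have e1 : Real.log (1 - p) - Real.log p =
        Real.log (1 - Real.sqrt x) - Real.log (1 + Real.sqrt x) := by
      have : 1 - p = (1 - Real.sqrt x)/2 := by rw [hp]; ring
      rw [this, hp, Real.log_div (by linarith) (by norm_num),
        Real.log_div (by positivity) (by norm_num)]
      ring
    refine HasDerivAt.congr_deriv dbe ?_
    symm
    rw [e1]
    have h4 : Real.sqrt x ≠ 0 := hsx.ne'
    field_simp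
    ring_nf
  apply AntitoneOn.concaveOn_of_deriv (convex_Icc 0 1)
  · have : Continuous f := by
      rw [hf]
      exact Real.binEntropy_continuous.comp ((continuous_const.add Real.continuous_sqrt).div_const 2)
    exact this.continuousOn
  · rw [hint]; intro x hx
    exact ((hd x hx).differentiableAt).differentiableWithinAt
  · rw [hint]
    intro x hx y hy hxy
    rw [(hd x hx).deriv, (hd y hy).deriv, neg_le_neg_iff]
    have hmem : ∀ z ∈ Ioo (0:ℝ) 1, Real.sqrt z ∈ Ioo (0:ℝ) 1 := by
      intro z hz
      refine ⟨Real.sqrt_pos.2 hz.1, ?_⟩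
      rw [show (1:ℝ) = Real.sqrt 1 by simp]
      exact Real.sqrt_lt_sqrt hz.1.le hz.2
    have := g_mono (hmem x hx) (hmem y hy) (Real.sqrt_le_sqrt hxy)
    simpa using div_le_div_of_nonneg_right this (by norm_num : (0:ℝ) ≤ 4)

lemma binEnt_eq (p : ℝ) : binEnt p = Real.binEntropy p / Real.log 2 := by
  unfold binEnt Real.binEntropy Real.logb
  rw [Real.log_inv, Real.log_inv]
  ring

/-- For a 2×2 rotation matrix `A` and singular values `0 ≤ d_z, d_x ≤ 1`,
with rows `Ã_z = (d_z A_zz, d_x A_zx)`, `Ã_x = (d_z A_xz, d_x A_xx)`: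
`h((1+‖Ã_z‖)/2) + h((1+‖Ã_x‖)/2) ≥ h((1+d_z)/2) + h((1+d_x)/2)`. -/
theorem binEnt_rotated_singular_values
    (Azz Azx Axz Axx dz dx : ℝ)
    (hrow1 : Azz ^ 2 + Azx ^ 2 = 1) (hrow2 : Axz ^ 2 + Axx ^ 2 = 1)
    (horth : Azz * Axz + Azx * Axx = 0) (hdet : Azz * Axx - Azx * Axz = 1)
    (hdz : dz ∈ Set.Icc (0 : ℝ) 1) (hdx : dx ∈ Set.Icc (0 : ℝ) 1) :
    binEnt ((1 + dz) / 2) + binEnt ((1 + dx) / 2) ≤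
      binEnt ((1 + Real.sqrt (dz ^ 2 * Azz ^ 2 + dx ^ 2 * Azx ^ 2)) / 2) +
        binEnt ((1 + Real.sqrt (dz ^ 2 * Axz ^ 2 + dx ^ 2 * Axx ^ 2)) / 2) := by
  obtain ⟨hdz0, hdz1⟩ := hdz
  obtain ⟨hdx0, hdx1⟩ := hdx
  have e1 : Axz = -Azx := by linear_combination Azz*horth - Azx*hdet - Axz*hrow1
  have e2 : Axx = Azz := by linear_combination Azx*horth + Azz*hdet - Axx*hrow1
  have hu : dz^2 ∈ Set.Icc (0:ℝ) 1 := ⟨by positivity, by nlinarith⟩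
  have hv : dx^2 ∈ Set.Icc (0:ℝ) 1 := ⟨by positivity, by nlinarith⟩
  have ha : (0:ℝ) ≤ Azz^2 := by positivity
  have hb : (0:ℝ) ≤ Azx^2 := by positivity
  have hab : Azz^2 + Azx^2 = 1 := hrow1
  have hconc := f_concave
  have h1 := hconc.2 hu hv ha hb hab
  have h2 := hconc.2 hu hv hb ha (by linarith)
  simp only [smul_eq_mul] at h1 h2
  have hsz : Real.sqrt (dz^2) = dz := Real.sqrt_sq hdz0
  have hsx : Real.sqrt (dx^2) = dx := Real.sqrt_sq hdx0
  rw [hsz] at h1 h2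
  rw [hsx] at h1 h2
  have ea : Azz^2 * dz^2 + Azx^2 * dx^2 = dz^2 * Azz^2 + dx^2 * Azx^2 := by ring
  have eb : Azx^2 * dz^2 + Azz^2 * dx^2 = dz^2 * Axz^2 + dx^2 * Axx^2 := by
    rw [e1, e2]; ring
  rw [ea] at h1
  rw [eb] at h2
  have hlog : (0:ℝ) < Real.log 2 := Real.log_pos one_lt_two
  simp only [binEnt_eq]
  rw [← add_div, ← add_div]
  apply div_le_div_of_nonneg_right ?_ hlog.le
  have key : Real.binEntropy ((1 + dz) / 2) + Real.binEntropy ((1 + dx) / 2) =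
      (Azz^2 * Real.binEntropy ((1 + dz) / 2) + Azx^2 * Real.binEntropy ((1 + dx) / 2)) +
      (Azx^2 * Real.binEntropy ((1 + dz) / 2) + Azz^2 * Real.binEntropy ((1 + dx) / 2)) := by
    linear_combination (-(Real.binEntropy ((1 + dz) / 2) + Real.binEntropy ((1 + dx) / 2))) * hab
  linarith [h1, h2]
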